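/- Let d ≥ 1, let C ⊆ ℝ^d be a nonempty closed convex cone, and for each t ≥ 1 let ⟨·,·⟩_(t) be an inner product on ℝ^d (a symmetric positive-definite bilinear form) with associated norm ‖·‖_(t). Assume ‖u‖_(t+1) ≤ ‖u‖_(t) for every u ∈ ℝ^d and t ≥ 1. Let (r_t)_{t≥1} be a sequence in ℝ^d, set R_0 = 0, R_t = r_1 + ⋯ + r_t, and for each t ≥ 1 let π_(t)(R_{t-1}) denote a point of C minimizing ‖R_{t-1} − r‖_(t) over r ∈ C. If for a given t ≥ 1 one has ⟨r_t, R_{t-1} − π_(t)(R_{t-1})⟩_(t) ≤ 0, then inf_{r ∈ C} ‖R_t − r‖_(t)² ≤ inf_{r ∈ C} ‖R_{t-1} − r‖_(t-1)² + ‖r_t‖_(t)², where for t = 1 the first term on the right is interpreted as 0 (since R_0 = 0 ∈ C). -/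

import Mathlib

open Finset

/-- One-step inequality in the analysis of Blackwell's algorithm with
time-dependent dot products: if the Blackwell condition holds at a given
step `t ≥ 1`, then
`inf_{r ∈ C} ‖R_t − r‖_(t)² ≤ inf_{r ∈ C} ‖R_{t−1} − r‖_(t−1)² + ‖r_t‖_(t)²`,
where for `t = 1` the first term on the right is interpreted as `0`. -/
theorem blackwell_one_step_inequality
    (d : ℕ) (hd : 1 ≤ d) (C : Set (Fin d → ℝ))
    (hCne : C.Nonempty) (hCclosed : IsClosed C)
    (hCadd : ∀ z ∈ C, ∀ z' ∈ C, z + z' ∈ C)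
    (hCsmul : ∀ z ∈ C, ∀ l : ℝ, 0 ≤ l → l • z ∈ C)
    -- the time-dependent dot products
    (inn : ℕ → (Fin d → ℝ) → (Fin d → ℝ) → ℝ)
    (hsymm : ∀ t ≥ 1, ∀ u v, inn t u v = inn t v u)
    (haddl : ∀ t ≥ 1, ∀ u u' v, inn t (u + u') v = inn t u v + inn t u' v)
    (hsmul : ∀ t ≥ 1, ∀ (c : ℝ) (u v), inn t (c • u) v = c * inn t u v)
    (hposdef : ∀ t ≥ 1, ∀ u, u ≠ 0 → 0 < inn t u u)
    -- the associated norms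
    (nrm : ℕ → (Fin d → ℝ) → ℝ)
    (hnrm : ∀ t ≥ 1, ∀ u, nrm t u = Real.sqrt (inn t u u))
    -- the family of norms is nonincreasing
    (hmono : ∀ t ≥ 1, ∀ u, nrm (t + 1) u ≤ nrm t u)
    -- the outcomes and their partial sums (R 0 = 0)
    (r : ℕ → Fin d → ℝ) (R : ℕ → Fin d → ℝ)
    (hR : ∀ t, R t = ∑ s ∈ Finset.Icc 1 t, r s)
    -- `p t` is a point of `C` minimizing the `(t)`-distance to `R (t-1)`
    (p : ℕ → Fin d → ℝ)
    (hpC : ∀ t ≥ 1, p t ∈ C)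
    (hpmin : ∀ t ≥ 1, ∀ q ∈ C, nrm t (R (t - 1) - p t) ≤ nrm t (R (t - 1) - q)) :
    ∀ t ≥ 1, inn t (r t) (R (t - 1) - p t) ≤ 0 →
      sInf ((fun q => nrm t (R t - q) ^ 2) '' C) ≤
        (if t = 1 then 0
          else sInf ((fun q => nrm (t - 1) (R (t - 1) - q) ^ 2) '' C)) +
        nrm t (r t) ^ 2 := by
  intro t ht hB
  obtain ⟨s, rfl⟩ : ∃ s, t = s + 1 := ⟨t - 1, by omega⟩
  simp only [Nat.add_sub_cancel] at *
  have hT1 : 1 ≤ s + 1 := by omega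
  have h0C : (0 : Fin d → ℝ) ∈ C := by
    obtain ⟨z, hz⟩ := hCne
    simpa using hCsmul z hz 0 le_rfl
  have hinn0 : ∀ v, inn (s + 1) 0 v = 0 := by
    intro v
    have := hsmul (s + 1) hT1 0 0 v
    simpa using this
  have hnonneg : ∀ u, 0 ≤ inn (s + 1) u u := by
    intro u
    rcases eq_or_ne u 0 with h | h
    · simp [h, hinn0]
    · exact (hposdef (s + 1) hT1 u h).le
  have hsq : ∀ u, nrm (s + 1) u ^ 2 = inn (s + 1) u u := by
    intro u
    rw [hnrm (s + 1) hT1 u, Real.sq_sqrt (hnonneg u)]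
  have haddr : ∀ u v v', inn (s + 1) u (v + v') = inn (s + 1) u v + inn (s + 1) u v' := by
    intro u v v'
    rw [hsymm (s + 1) hT1, haddl (s + 1) hT1, hsymm (s + 1) hT1 v u, hsymm (s + 1) hT1 v' u]
  have hRt : R (s + 1) = R s + r (s + 1) := by
    rw [hR (s + 1), hR s, Finset.sum_Icc_succ_top (by omega : 1 ≤ s + 1)]
  set a := R s - p (s + 1) with ha
  set b := r (s + 1) with hb
  have hab : R (s + 1) - p (s + 1) = a + b := by
    rw [hRt, ha, hb]; abel
  have key : inn (s + 1) (a + b) (a + b) ≤ inn (s + 1) a a + inn (s + 1) b b := by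
    have h1 : inn (s + 1) a b = inn (s + 1) b a := hsymm (s + 1) hT1 a b
    have h2 : inn (s + 1) b a ≤ 0 := hB
    rw [haddl (s + 1) hT1, haddr, haddr]
    linarith
  have hbdd : BddBelow ((fun q => nrm (s + 1) (R (s + 1) - q) ^ 2) '' C) := by
    refine ⟨0, ?_⟩
    rintro x ⟨q, -, rfl⟩
    exact sq_nonneg _
  have step1 : sInf ((fun q => nrm (s + 1) (R (s + 1) - q) ^ 2) '' C) ≤
      inn (s + 1) a a + inn (s + 1) b b := by
    calc sInf ((fun q => nrm (s + 1) (R (s + 1) - q) ^ 2) '' C)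
        ≤ nrm (s + 1) (R (s + 1) - p (s + 1)) ^ 2 :=
          csInf_le hbdd ⟨p (s + 1), hpC (s + 1) hT1, rfl⟩
      _ = inn (s + 1) (a + b) (a + b) := by rw [hab, hsq]
      _ ≤ inn (s + 1) a a + inn (s + 1) b b := key
  have step2 : inn (s + 1) a a ≤
      (if s + 1 = 1 then 0 else sInf ((fun q => nrm s (R s - q) ^ 2) '' C)) := by
    rcases Nat.eq_zero_or_pos s with hs0 | hs1
    · subst hs0
      rw [if_pos rfl]
      have hR0 : R 0 = 0 := by rw [hR 0]; simp
      have hmin := hpmin 1 le_rfl 0 h0C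
      rw [show (1 : ℕ) - 1 = 0 from rfl, hR0, sub_zero] at hmin
      have hz : nrm 1 (0 : Fin d → ℝ) = 0 := by
        rw [hnrm 1 le_rfl]
        simp [hinn0]
      have hge : 0 ≤ nrm 1 ((0 : Fin d → ℝ) - p 1) := by
        rw [hnrm 1 le_rfl]; exact Real.sqrt_nonneg _
      have hz2 : nrm 1 ((0 : Fin d → ℝ) - p 1) = 0 := le_antisymm (hz ▸ hmin) hge
      have : inn (0 + 1) a a = nrm (0 + 1) a ^ 2 := (hsq a).symm
      rw [this, ha, hR0]
      simp only [Nat.zero_add] at hz2 ⊢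
      rw [hz2]
      norm_num
    · rw [if_neg (by omega)]
      rw [← hsq a]
      refine le_csInf ⟨_, ⟨p (s + 1), hpC (s + 1) hT1, rfl⟩⟩ ?_
      rintro x ⟨q, hq, rfl⟩
      have hna : 0 ≤ nrm (s + 1) a := by
        rw [hnrm (s + 1) hT1]; exact Real.sqrt_nonneg _
      have h3 : nrm (s + 1) a ≤ nrm (s + 1) (R s - q) := hpmin (s + 1) hT1 q hq
      have h4 : nrm (s + 1) (R s - q) ≤ nrm s (R s - q) := hmono s hs1 _
      exact pow_le_pow_left₀ hna (h3.trans h4) 2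
  have step3 : inn (s + 1) b b = nrm (s + 1) b ^ 2 := (hsq b).symm
  linarith
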